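/- Let Ω ⊆ ℝ² be open, let F, U : ℝ² → ℝ be continuously differentiable on Ω with U nonvanishing on Ω, and let g : ℝ² → ℝ be twice continuously differentiable on Ω. Then for every p ∈ Ω, (D_h(D_x g))(p) − (D_x(D_h g))(p) = (U p)⁻² · (∂₁U(p) + ∂₂(F·U)(p)) · ∂₂g(p). -/

import Mathlib

noncomputable section

/-- Partial derivative with respect to the first variable. -/
def pd1 (f : ℝ × ℝ → ℝ) (p : ℝ × ℝ) : ℝ := deriv (fun t => f (t, p.2)) p.1

/-- Partial derivative with respect to the second variable. -/
def pd2 (f : ℝ × ℝ → ℝ) (p : ℝ × ℝ) : ℝ := deriv (fun t => f (p.1, t)) p.2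

/-- The operator `D_x g = ∂₁ g + F · ∂₂ g`. -/
def Dx (F : ℝ × ℝ → ℝ) (g : ℝ × ℝ → ℝ) (p : ℝ × ℝ) : ℝ := pd1 g p + F p * pd2 g p

/-- The operator `D_h g = U⁻¹ · ∂₂ g`. -/
def Dh (U : ℝ × ℝ → ℝ) (g : ℝ × ℝ → ℝ) (p : ℝ × ℝ) : ℝ := (U p)⁻¹ * pd2 g p

lemma hline (p : ℝ × ℝ) : HasDerivAt (fun t : ℝ => (t, p.2)) ((1 : ℝ), (0 : ℝ)) p.1 :=
  (hasDerivAt_id p.1).prodMk (hasDerivAt_const p.1 p.2)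

lemma vline (p : ℝ × ℝ) : HasDerivAt (fun t : ℝ => (p.1, t)) ((0 : ℝ), (1 : ℝ)) p.2 :=
  (hasDerivAt_const p.2 p.1).prodMk (hasDerivAt_id p.2)

lemma pd1_eq {f : ℝ × ℝ → ℝ} {p : ℝ × ℝ} (hf : DifferentiableAt ℝ f p) :
    pd1 f p = fderiv ℝ f p (1, 0) :=
  (hf.hasFDerivAt.comp_hasDerivAt p.1 (hline p)).deriv

lemma pd2_eq {f : ℝ × ℝ → ℝ} {p : ℝ × ℝ} (hf : DifferentiableAt ℝ f p) :
    pd2 f p = fderiv ℝ f p (0, 1) :=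
  (hf.hasFDerivAt.comp_hasDerivAt p.2 (vline p)).deriv

/-- the commutator `D_h D_x − D_x D_h` applied to `g` equals
`U⁻² (∂₁U + ∂₂(F·U)) ∂₂g` on `Ω`. -/
theorem commutator_DhDx (Ω : Set (ℝ × ℝ)) (hΩ : IsOpen Ω)
    (F U g : ℝ × ℝ → ℝ)
    (hF : ContDiffOn ℝ 1 F Ω) (hU : ContDiffOn ℝ 1 U Ω)
    (hU0 : ∀ p ∈ Ω, U p ≠ 0)
    (hg : ContDiffOn ℝ 2 g Ω) :
    ∀ p ∈ Ω,
      Dh U (Dx F g) p - Dx F (Dh U g) p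
        = ((U p) ^ 2)⁻¹ * (pd1 U p + pd2 (fun q => F q * U q) p) * pd2 g p := by
  intro p hp
  have hpΩ : Ω ∈ nhds p := hΩ.mem_nhds hp
  have hgp : ContDiffAt ℝ 2 g p := hg.contDiffAt hpΩ
  have hFd : DifferentiableAt ℝ F p :=
    (hF.contDiffAt hpΩ).differentiableAt one_ne_zero
  have hUd : DifferentiableAt ℝ U p :=
    (hU.contDiffAt hpΩ).differentiableAt one_ne_zero
  have hgdiff : ∀ q ∈ Ω, DifferentiableAt ℝ g q := fun q hq =>
    (hg.contDiffAt (hΩ.mem_nhds hq)).differentiableAt (by norm_num)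
  -- second derivative
  have hB : HasFDerivAt (fderiv ℝ g) (fderiv ℝ (fderiv ℝ g) p) p :=
    ((hgp.fderiv_right (m := 1) (by norm_num)).differentiableAt one_ne_zero).hasFDerivAt
  set B := fderiv ℝ (fderiv ℝ g) p with hBdef
  have hsymm : ∀ v w : ℝ × ℝ, B v w = B w v := hgp.isSymmSndFDerivAt (by norm_num)
  -- the component functions of the first derivative
  set φ1 : ℝ × ℝ → ℝ := fun q => fderiv ℝ g q (1, 0) with hφ1def
  set φ2 : ℝ × ℝ → ℝ := fun q => fderiv ℝ g q (0, 1) with hφ2def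
  have hφ1 : HasFDerivAt φ1 ((ContinuousLinearMap.apply ℝ ℝ ((1:ℝ), (0:ℝ))).comp B) p :=
    (ContinuousLinearMap.apply ℝ ℝ ((1:ℝ), (0:ℝ))).hasFDerivAt.comp p hB
  have hφ2 : HasFDerivAt φ2 ((ContinuousLinearMap.apply ℝ ℝ ((0:ℝ), (1:ℝ))).comp B) p :=
    (ContinuousLinearMap.apply ℝ ℝ ((0:ℝ), (1:ℝ))).hasFDerivAt.comp p hB
  -- abbreviations
  set a1 := fderiv ℝ U p (1, 0) with ha1
  set a2 := fderiv ℝ U p (0, 1) with ha2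
  set f2 := fderiv ℝ F p (0, 1) with hf2
  -- derivatives along the vertical line through p
  have HF2 : HasDerivAt (fun t => F (p.1, t)) f2 p.2 :=
    hFd.hasFDerivAt.comp_hasDerivAt p.2 (vline p)
  have HU2 : HasDerivAt (fun t => U (p.1, t)) a2 p.2 :=
    hUd.hasFDerivAt.comp_hasDerivAt p.2 (vline p)
  have HU1 : HasDerivAt (fun t => U (t, p.2)) a1 p.1 :=
    hUd.hasFDerivAt.comp_hasDerivAt p.1 (hline p)
  have Hφ1v : HasDerivAt (fun t => φ1 (p.1, t)) (B (0, 1) (1, 0)) p.2 := by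
    exact hφ1.comp_hasDerivAt p.2 (vline p)
  have Hφ2v : HasDerivAt (fun t => φ2 (p.1, t)) (B (0, 1) (0, 1)) p.2 := by
    exact hφ2.comp_hasDerivAt p.2 (vline p)
  have Hφ2h : HasDerivAt (fun t => φ2 (t, p.2)) (B (1, 0) (0, 1)) p.1 := by
    exact hφ2.comp_hasDerivAt p.1 (hline p)
  -- neighborhood facts
  have hvmem : {t : ℝ | (p.1, t) ∈ Ω} ∈ nhds p.2 := by
    have hc : Continuous fun t : ℝ => ((p.1, t) : ℝ × ℝ) :=
      continuous_const.prodMk continuous_id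
    exact hc.continuousAt.preimage_mem_nhds hpΩ
  have hhmem : {t : ℝ | (t, p.2) ∈ Ω} ∈ nhds p.1 := by
    have hc : Continuous fun t : ℝ => ((t, p.2) : ℝ × ℝ) :=
      continuous_id.prodMk continuous_const
    exact hc.continuousAt.preimage_mem_nhds hpΩ
  -- compute pd2 (Dx F g) p
  have e1 : pd2 (Dx F g) p = B (0, 1) (1, 0) + (f2 * φ2 p + F p * B (0, 1) (0, 1)) := by
    have hev : (fun t => Dx F g (p.1, t))
        =ᶠ[nhds p.2] fun t => φ1 (p.1, t) + F (p.1, t) * φ2 (p.1, t) := by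
      filter_upwards [hvmem] with t ht
      simp only [Dx, hφ1def, hφ2def]
      rw [pd1_eq (hgdiff _ ht), pd2_eq (hgdiff _ ht)]
    have H : HasDerivAt (fun t => φ1 (p.1, t) + F (p.1, t) * φ2 (p.1, t))
        (B (0, 1) (1, 0) + (f2 * φ2 p + F p * B (0, 1) (0, 1))) p.2 :=
      Hφ1v.add (HF2.mul Hφ2v)
    rw [pd2, hev.deriv_eq, H.deriv]
  -- compute pd1 (Dh U g) p
  have hUp0 : U p ≠ 0 := hU0 p hp
  have e2 : pd1 (Dh U g) p = -a1 / U p ^ 2 * φ2 p + (U p)⁻¹ * B (1, 0) (0, 1) := by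
    have hev : (fun t => Dh U g (t, p.2))
        =ᶠ[nhds p.1] fun t => (U (t, p.2))⁻¹ * φ2 (t, p.2) := by
      filter_upwards [hhmem] with t ht
      simp only [Dh, hφ2def]
      rw [pd2_eq (hgdiff _ ht)]
    have H : HasDerivAt (fun t => (U (t, p.2))⁻¹ * φ2 (t, p.2))
        (-a1 / U p ^ 2 * φ2 p + (U p)⁻¹ * B (1, 0) (0, 1)) p.1 :=
      (HU1.inv hUp0).mul Hφ2h
    rw [pd1, hev.deriv_eq, H.deriv]
  -- compute pd2 (Dh U g) p
  have e3 : pd2 (Dh U g) p = -a2 / U p ^ 2 * φ2 p + (U p)⁻¹ * B (0, 1) (0, 1) := by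
    have hev : (fun t => Dh U g (p.1, t))
        =ᶠ[nhds p.2] fun t => (U (p.1, t))⁻¹ * φ2 (p.1, t) := by
      filter_upwards [hvmem] with t ht
      simp only [Dh, hφ2def]
      rw [pd2_eq (hgdiff _ ht)]
    have H : HasDerivAt (fun t => (U (p.1, t))⁻¹ * φ2 (p.1, t))
        (-a2 / U p ^ 2 * φ2 p + (U p)⁻¹ * B (0, 1) (0, 1)) p.2 :=
      (HU2.inv hUp0).mul Hφ2v
    rw [pd2, hev.deriv_eq, H.deriv]
  -- compute the RHS ingredients
  have e4 : pd1 U p = a1 := pd1_eq hUd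
  have e5 : pd2 (fun q => F q * U q) p = f2 * U p + F p * a2 := by
    have H : HasDerivAt (fun t => F (p.1, t) * U (p.1, t)) (f2 * U p + F p * a2) p.2 :=
      HF2.mul HU2
    exact H.deriv
  have e6 : pd2 g p = φ2 p := pd2_eq (hgdiff p hp)
  -- put everything together
  show (U p)⁻¹ * pd2 (Dx F g) p - (pd1 (Dh U g) p + F p * pd2 (Dh U g) p) = _
  rw [e1, e2, e3, e4, e5, e6, hsymm (0, 1) (1, 0)]
  field_simp
  ring
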